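/- Let k ≥ 2, ε ≥ 0, and let ŷ, â ∈ ℝ^k satisfy: ŷ_1 ≥ ŷ_2 ≥ … ≥ ŷ_k; ŷ_i + ŷ_j ≥ −4ε and â_i + â_j ≥ −4ε for all i ≠ j; and ŷ_i ≥ â_i − 4ε for all i. If ŷ_1 ≥ ŷ_2 > 0 and ŷ_i ≤ 0 for every i ≥ 3, then for every i* ∈ {1,…,k}: (â_1 + ŷ_1)·ŷ_1 + (â_2 + ŷ_2)·ŷ_2 ≥ (â_{i*} − 14ε)·(ŷ_1 + ŷ_2). -/
import Mathlib


namespace Stmt4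

/-- Case `i⁺ = 2` of the robustness analysis of the unconstrained non-monotone
algorithm: if `ŷ_1 ≥ ŷ_2 > 0` and `ŷ_i ≤ 0` for `i ≥ 3`, then
`(â_1 + ŷ_1)ŷ_1 + (â_2 + ŷ_2)ŷ_2 ≥ (â_{i*} − 14ε)(ŷ_1 + ŷ_2)`. -/
theorem stmt4 (k : ℕ) (hk : 2 ≤ k) (ε : ℝ) (hε : 0 ≤ ε) (y a : ℕ → ℝ)
    (hord : ∀ i ∈ Finset.Icc 1 k, ∀ j ∈ Finset.Icc 1 k, i ≤ j → y j ≤ y i)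
    (hpy : ∀ i ∈ Finset.Icc 1 k, ∀ j ∈ Finset.Icc 1 k, i ≠ j →
      y i + y j ≥ -(4 * ε))
    (hpa : ∀ i ∈ Finset.Icc 1 k, ∀ j ∈ Finset.Icc 1 k, i ≠ j →
      a i + a j ≥ -(4 * ε))
    (hya : ∀ i ∈ Finset.Icc 1 k, y i ≥ a i - 4 * ε)
    (h12 : y 1 ≥ y 2) (h2pos : 0 < y 2)
    (hneg : ∀ i ∈ Finset.Icc 1 k, 3 ≤ i → y i ≤ 0)
    (istar : ℕ) (histar : istar ∈ Finset.Icc 1 k) :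
    (a 1 + y 1) * y 1 + (a 2 + y 2) * y 2 ≥ (a istar - 14 * ε) * (y 1 + y 2) := by
  have h1m : (1 : ℕ) ∈ Finset.Icc 1 k := Finset.mem_Icc.2 ⟨le_refl 1, by omega⟩
  have h2m : (2 : ℕ) ∈ Finset.Icc 1 k := Finset.mem_Icc.2 ⟨by omega, hk⟩
  have hya1 := hya 1 h1m
  have hya2 := hya 2 h2m
  have hyas := hya istar histar
  have ha12 := hpa 1 h1m 2 h2m (by omega)
  have h1pos : 0 < y 1 := lt_of_lt_of_le h2pos h12
  rcases Finset.mem_Icc.1 histar with ⟨hi1, hik⟩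
  obtain h | h | h3 : istar = 1 ∨ istar = 2 ∨ 3 ≤ istar := by omega
  · -- istar = 1
    subst h
    nlinarith [sq_nonneg (y 1 - y 2), mul_pos h1pos h2pos]
  · -- istar = 2
    subst h
    nlinarith [sq_nonneg (y 1 - y 2), mul_pos h1pos h2pos]
  · have hys : y istar ≤ 0 := hneg istar histar h3
    have ha1s := hpa 1 h1m istar histar (by omega)
    have ha2s := hpa 2 h2m istar histar (by omega)
    have has : a istar ≤ 4 * ε := by linarith
    nlinarith [sq_nonneg (y 1), sq_nonneg (y 2), mul_pos h1pos h2pos,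
      mul_nonneg hε (le_of_lt h1pos), mul_nonneg hε (le_of_lt h2pos)]

end Stmt4
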